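/- Let q be a prime with q > 3 and q ≡ 3 (mod 4), and let A = ℤ/2 × ℤ/2 × ℤ/q. Then there is no regular subgroup G of Hol(A) such that the image π₂(G) has order 4. -/

import Mathlib

/-- The holomorph `Hol(A) = A ⋊ Aut(A)` of a group `A`. -/
abbrev Hol (A : Type*) [Group A] :=
  SemidirectProduct A (MulAut A) (MonoidHom.id (MulAut A))

/-- The natural action of an element `(a, f)` of `Hol(A)` on `A`: `(a, f) · x = a * f x`. -/
def holSmul {A : Type*} [Group A] (g : Hol A) (x : A) : A :=
  g.left * g.right x

/-- A subgroup `G ≤ Hol(A)` is regular if for all `x y : A` there is exactly one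
`g ∈ G` with `g · x = y`. -/
def IsRegularSubgroup {A : Type*} [Group A] (G : Subgroup (Hol A)) : Prop :=
  ∀ x y : A, ∃! g : G, holSmul (g : Hol A) x = y

set_option maxRecDepth 40000 in
private lemma aux_invol (s : ZMod 2 × ZMod 2 → ZMod 2 × ZMod 2)
    (hadd : ∀ p r, s (p + r) = s p + s r) (h4 : ∀ p, s (s (s (s p))) = p) :
    ∀ p, s (s p) = p := by revert hadd h4; revert s; decide

set_option maxRecDepth 40000 in
private lemma aux_fix (s : ZMod 2 × ZMod 2 → ZMod 2 × ZMod 2)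
    (hadd : ∀ p r, s (p + r) = s p + s r) (h2 : ∀ p, s (s p) = p)
    (hne : ∃ p, s p ≠ p) : ∀ v, s v = v → ∃ x, x + s x = v := by
  revert hadd h2 hne; revert s; decide


set_option maxHeartbeats 2000000 in
/-- Let `q > 3` be a prime with `q ≡ 3 (mod 4)` and let `A = ℤ/2 × ℤ/2 × ℤ/q`.
Then there is no regular subgroup `G ≤ Hol(A)` whose image under the projection
`π₂ : Hol(A) → Aut(A)` has order `4`. -/
theorem stmt_19 (q : ℕ) (hq : q.Prime) (hq3 : 3 < q) (hmod : q ≡ 3 [MOD 4]) :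
    ¬ ∃ G : Subgroup (Hol (Multiplicative (ZMod 2 × ZMod 2 × ZMod q))),
        IsRegularSubgroup G ∧
        Nat.card (G.map SemidirectProduct.rightHom) = 4 := by
  rintro ⟨G, hreg, hcard4⟩
  haveI : Fact q.Prime := ⟨hq⟩
  set M := ZMod 2 × ZMod 2 × ZMod q with hM
  set A := Multiplicative M with hA
  have hq4 : q % 4 = 3 := by simpa [Nat.ModEq] using hmod
  have hq2 : (q : ZMod 2) = 1 := by
    have h2 : q % 2 = 1 := by omega
    rw [← ZMod.natCast_mod q 2, h2, Nat.cast_one]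
  have hne2 : ∀ y : ZMod 2, y + y = 0 := by decide
  have hQ2 : ∀ c : ZMod q, c + c = 0 → c = 0 := by
    intro c hc
    have h2 : (2 : ZMod q) * c = 0 := by rw [two_mul]; exact hc
    rcases mul_eq_zero.1 h2 with h | h
    · exfalso
      have : ((2 : ℕ) : ZMod q) = 0 := by exact_mod_cast h
      rw [ZMod.natCast_eq_zero_iff] at this
      have := Nat.le_of_dvd (by norm_num) this
      omega
    · exact h
  -- the key q-smul computation
  have hkey : ∀ m : M, q • m = (m.1, m.2.1, 0) := by
    intro m
    rw [nsmul_eq_mul]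
    ext
    · rw [Prod.fst_mul, Prod.fst_natCast, hq2, one_mul]
    · rw [Prod.snd_mul, Prod.snd_natCast, Prod.fst_mul, Prod.fst_natCast, hq2, one_mul]
    · rw [Prod.snd_mul, Prod.snd_natCast, Prod.snd_mul, Prod.snd_natCast, ZMod.natCast_self,
        zero_mul]
  -- Finiteness
  haveI : Finite (Hol A) :=
    Finite.of_injective (fun g : Hol A => (g.left, g.right))
      (by intro a b h; simp only [Prod.mk.injEq] at h; exact SemidirectProduct.ext h.1 h.2)
  -- cardinality of A
  have cardA : Nat.card A = 4 * q := by
    rw [hA, Nat.card_congr (Multiplicative.toAdd (α := M)), hM, Nat.card_prod, Nat.card_prod,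
      Nat.card_zmod, Nat.card_zmod]
    omega
  -- G acts bijectively via holSmul at 1
  have hbij : Function.Bijective (fun g : G => holSmul (g : Hol A) (1 : A)) := by
    constructor
    · intro g g' hgg'
      obtain ⟨u, hu, huniq⟩ := hreg 1 (holSmul (g' : Hol A) 1)
      rw [huniq g hgg', huniq g' rfl]
    · intro y
      obtain ⟨u, hu, -⟩ := hreg 1 y
      exact ⟨u, hu⟩
  have cardG : Nat.card G = 4 * q := by
    rw [Nat.card_congr (Equiv.ofBijective _ hbij)]; exact cardA
  -- the projection homomorphism
  set φ : G →* MulAut A := SemidirectProduct.rightHom.comp G.subtype with hφ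
  have kermem : ∀ k : G, k ∈ φ.ker ↔ ((k : Hol A).right = 1) := by
    intro k
    rw [hφ, MonoidHom.mem_ker, MonoidHom.comp_apply]
    constructor <;> (intro h; exact h)
  have hrange : φ.range = G.map SemidirectProduct.rightHom := by
    rw [hφ, MonoidHom.range_comp, Subgroup.range_subtype]
  have cardQuot : Nat.card (G ⧸ φ.ker) = 4 := by
    rw [Nat.card_congr (QuotientGroup.quotientKerEquivRange φ).toEquiv, hrange, hcard4]
  have cardker : Nat.card φ.ker = q := by
    have := Subgroup.card_eq_card_quotient_mul_card_subgroup (φ.ker)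
    rw [cardQuot, cardG] at this
    omega
  -- elements of G with trivial right component: left component has order dividing q
  have hker_pow : ∀ h : Hol A, (hmem : h ∈ G) → h.right = 1 → h.left ^ q = 1 := by
    intro h hmem hr
    have hk : (⟨h, hmem⟩ : G) ∈ φ.ker := (kermem _).2 hr
    have hpow : (⟨⟨h, hmem⟩, hk⟩ : φ.ker) ^ q = 1 := by
      have := pow_card_eq_one' (G := φ.ker) (x := ⟨⟨h, hmem⟩, hk⟩)
      rwa [cardker] at this
    have h0 : (⟨h, hmem⟩ : G) ^ q = 1 := congrArg Subtype.val hpow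
    have hpow2 : h ^ q = 1 := congrArg Subtype.val h0
    have hinl : h = (SemidirectProduct.inl h.left : Hol A) := by
      apply SemidirectProduct.ext
      · simp
      · simp [hr]
    rw [hinl, ← map_pow] at hpow2
    have : (SemidirectProduct.inl (h.left ^ q) : Hol A) = SemidirectProduct.inl (1 : A) := by
      simpa using hpow2
    exact SemidirectProduct.inl_injective this
  -- q-torsion elements have trivial 2-components
  have h12 : ∀ x : A, x ^ q = 1 → (Multiplicative.toAdd x).1 = 0 ∧
      (Multiplicative.toAdd x).2.1 = 0 := by
    intro x hx
    have h0 : q • Multiplicative.toAdd x = 0 := by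
      rw [← toAdd_pow, hx]; rfl
    rw [hkey] at h0
    exact ⟨congrArg Prod.fst h0, congrArg (fun p => p.2.1) h0⟩
  have hker12 : ∀ h : Hol A, h ∈ G → h.right = 1 → (Multiplicative.toAdd h.left).1 = 0 ∧
      (Multiplicative.toAdd h.left).2.1 = 0 := fun h hmem hr => h12 _ (hker_pow h hmem hr)
  have rightof : ∀ k : φ.ker, ((k : G) : Hol A).right = 1 := fun k => (kermem _).1 k.2
  have hker_surj : ∀ c : ZMod q, ∃ h : Hol A, h ∈ G ∧ h.right = 1 ∧
      h.left = Multiplicative.ofAdd ((0, 0, c) : M) := by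
    have hinj : Function.Injective
        (fun k : φ.ker => (Multiplicative.toAdd ((k : G) : Hol A).left).2.2) := by
      intro k k' hkk'
      have h1 := hker12 _ ((k : G)).2 (rightof k)
      have h2 := hker12 _ ((k' : G)).2 (rightof k')
      have hleft : ((k : G) : Hol A).left = ((k' : G) : Hol A).left := by
        have : Multiplicative.toAdd ((k : G) : Hol A).left
            = Multiplicative.toAdd ((k' : G) : Hol A).left := by
          ext
          · rw [h1.1, h2.1]
          · rw [h1.2, h2.2]
          · exact hkk'
        exact Multiplicative.toAdd.injective this
      have : ((k : G) : Hol A) = ((k' : G) : Hol A) :=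
        SemidirectProduct.ext hleft (by rw [rightof k, rightof k'])
      exact Subtype.ext (Subtype.ext this)
    have hbij2 : Function.Bijective
        (fun k : φ.ker => (Multiplicative.toAdd ((k : G) : Hol A).left).2.2) := by
      rw [Nat.bijective_iff_injective_and_card]
      exact ⟨hinj, by rw [cardker, Nat.card_zmod]⟩
    intro c
    obtain ⟨k, hk⟩ := hbij2.2 c
    refine ⟨((k : G) : Hol A), ((k : G)).2, rightof k, ?_⟩
    have h1 := hker12 _ ((k : G)).2 (rightof k)
    have : Multiplicative.toAdd ((k : G) : Hol A).left = ((0 : ZMod 2), (0 : ZMod 2), c) := by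
      ext
      · exact h1.1
      · exact h1.2
      · exact hk
    calc ((k : G) : Hol A).left
        = Multiplicative.ofAdd (Multiplicative.toAdd ((k : G) : Hol A).left) := rfl
      _ = Multiplicative.ofAdd ((0, 0, c) : M) := by rw [this]
  -- the "q-part scaling" invariant of an automorphism
  set e : A := Multiplicative.ofAdd ((0, 0, 1) : M) with he
  have heq : e ^ q = 1 := by
    rw [he, ← ofAdd_nsmul, hkey]
    rfl
  set t : MulAut A → ZMod q := fun f => (Multiplicative.toAdd (f e)).2.2 with ht
  have hfe : ∀ f : MulAut A, f e = Multiplicative.ofAdd ((0, 0, t f) : M) := by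
    intro f
    have hq1 : (f e) ^ q = 1 := by rw [← map_pow, heq, map_one]
    have h1 := h12 _ hq1
    have : Multiplicative.toAdd (f e) = ((0 : ZMod 2), (0 : ZMod 2), t f) := by
      ext
      · exact h1.1
      · exact h1.2
      · rfl
    calc f e = Multiplicative.ofAdd (Multiplicative.toAdd (f e)) := rfl
      _ = _ := by rw [this]
  have hval : ∀ c : ZMod q, ((c.val : ℕ) : ZMod q) = c := by
    intro c; simp [ZMod.natCast_val, ZMod.cast_id]
  have hsm : ∀ (n : ℕ) (x : ZMod q), (n • ((0, 0, x) : M)) = (0, 0, (n : ZMod q) * x) := by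
    intro n x
    rw [nsmul_eq_mul]
    ext
    · rw [Prod.fst_mul, Prod.fst_natCast, mul_zero]
    · rw [Prod.snd_mul, Prod.snd_natCast, Prod.fst_mul, Prod.fst_natCast, mul_zero]
    · rw [Prod.snd_mul, Prod.snd_natCast, Prod.snd_mul, Prod.snd_natCast]
  have hofc : ∀ c : ZMod q, Multiplicative.ofAdd ((0, 0, c) : M) = e ^ c.val := by
    intro c
    rw [he, ← ofAdd_nsmul, hsm, mul_one, hval]
  have hfc : ∀ (f : MulAut A) (c : ZMod q),
      f (Multiplicative.ofAdd ((0, 0, c) : M)) = Multiplicative.ofAdd ((0, 0, c * t f) : M) := by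
    intro f c
    rw [hofc c, map_pow, hfe, ← ofAdd_nsmul, hsm, hval]
  have hmul : ∀ f g : MulAut A, t (f * g) = t g * t f := by
    intro f g
    have : (f * g) e = Multiplicative.ofAdd ((0, 0, t g * t f) : M) := by
      have : (f * g) e = f (g e) := rfl
      rw [this, hfe g, hfc f]
    rw [ht]
    simp only [this]
    rfl
  have ht1 : t 1 = 1 := by rw [ht]; simp [he]
  -- every element of the image P satisfies t = ±1
  have hP4 : ∀ fp : (G.map SemidirectProduct.rightHom), fp ^ 4 = 1 := by
    intro fp
    have := pow_card_eq_one' (x := fp)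
    rwa [hcard4] at this
  have hone : (-1 : ZMod q) ≠ 1 := by
    intro hcon
    have h2 : (1 : ZMod q) + 1 = 0 := by
      calc (1 : ZMod q) + 1 = -1 + 1 := by rw [hcon]
        _ = 0 := neg_add_cancel 1
    exact one_ne_zero (hQ2 1 h2)
  have htval : ∀ fp : (G.map SemidirectProduct.rightHom),
      t (fp : MulAut A) = 1 ∨ t (fp : MulAut A) = -1 := by
    intro fp
    have h4 : (fp : MulAut A) ^ 4 = 1 := congrArg Subtype.val (hP4 fp)
    have e1 : ((fp : MulAut A) * fp) * ((fp : MulAut A) * fp) = (fp : MulAut A) ^ 4 := by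
      rw [pow_succ, pow_succ, pow_succ, pow_one]
      simp only [mul_assoc]
    have e2 := hmul ((fp : MulAut A) * fp) ((fp : MulAut A) * fp)
    rw [e1, h4, ht1, hmul] at e2
    have hx4 : (t (fp : MulAut A) * t (fp : MulAut A)) *
        (t (fp : MulAut A) * t (fp : MulAut A)) = 1 := e2.symm
    have hx2 : t (fp : MulAut A) * t (fp : MulAut A) = 1 := by
      rcases mul_self_eq_one_iff.1 hx4 with h | h
      · exact h
      · exfalso
        have : IsSquare (-1 : ZMod q) := ⟨t (fp : MulAut A), h.symm⟩
        rw [ZMod.exists_sq_eq_neg_one_iff] at this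
        exact this hq4
    exact mul_self_eq_one_iff.1 hx2
  -- pigeonhole: two elements of P with the same t-value
  have h42 : ¬ Function.Injective
      (fun fp : (G.map SemidirectProduct.rightHom) => decide (t (fp : MulAut A) = 1)) := by
    intro hinj
    have hle := Nat.card_le_card_of_injective _ hinj
    rw [hcard4] at hle
    have : Nat.card Bool = 2 := by simp [Nat.card_eq_fintype_card]
    omega
  rw [Function.not_injective_iff] at h42
  obtain ⟨f₁, f₂, hbeq, hne12⟩ := h42
  rw [decide_eq_decide] at hbeq
  have hteq : t (f₁ : MulAut A) = t (f₂ : MulAut A) := by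
    rcases htval f₁ with h1 | h1 <;> rcases htval f₂ with h2 | h2 <;> rw [h1, h2]
    · exfalso; rw [h1, h2] at hbeq; exact hone (hbeq.1 rfl)
    · exfalso; rw [h1, h2] at hbeq; exact hone (hbeq.2 rfl)
  -- the element w : a nontrivial automorphism in P fixing the ZMod q part
  set fd : (G.map SemidirectProduct.rightHom) := f₁⁻¹ * f₂ with hfd
  set w : MulAut A := (fd : MulAut A) with hwdef
  have hfd_ne : fd ≠ 1 := by
    intro hcon
    exact hne12 (inv_mul_eq_one.1 hcon)
  have hw_ne : w ≠ 1 := by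
    intro hcon
    exact hfd_ne (Subtype.ext hcon)
  have hw_mem : w ∈ G.map SemidirectProduct.rightHom := fd.2
  have htw : t w = 1 := by
    have hprod : f₁ * fd = f₂ := by rw [hfd]; group
    have hprod2 : (f₁ : MulAut A) * w = (f₂ : MulAut A) := by
      rw [hwdef, ← hprod]; rfl
    have e3 := hmul (f₁ : MulAut A) w
    rw [hprod2, ← hteq] at e3
    have hnz : t (f₁ : MulAut A) ≠ 0 := by
      rcases htval f₁ with h1 | h1 <;> rw [h1]
      · exact one_ne_zero
      · exact neg_ne_zero.2 one_ne_zero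
    have : t w * t (f₁ : MulAut A) = 1 * t (f₁ : MulAut A) := by
      rw [one_mul, ← e3]
    exact mul_right_cancel₀ hnz this
  have hwq : ∀ c : ZMod q,
      w (Multiplicative.ofAdd ((0, 0, c) : M)) = Multiplicative.ofAdd ((0, 0, c) : M) := by
    intro c
    rw [hfc, htw, mul_one]
  have hw4 : w ^ 4 = 1 := congrArg Subtype.val (hP4 fd)
  -- the induced map σ on the 2-part
  set σ : ZMod 2 × ZMod 2 → ZMod 2 × ZMod 2 := fun p =>
    ((Multiplicative.toAdd (w (Multiplicative.ofAdd ((p.1, p.2, 0) : M)))).1,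
     (Multiplicative.toAdd (w (Multiplicative.ofAdd ((p.1, p.2, 0) : M)))).2.1) with hσ
  have hwsplit : ∀ p₁ p₂ : ZMod 2, w (Multiplicative.ofAdd ((p₁, p₂, 0) : M)) =
      Multiplicative.ofAdd (((σ (p₁, p₂)).1, (σ (p₁, p₂)).2, 0) : M) := by
    intro p₁ p₂
    have hsq : (w (Multiplicative.ofAdd ((p₁, p₂, 0) : M))) ^ 2 = 1 := by
      rw [← map_pow]
      have : (Multiplicative.ofAdd ((p₁, p₂, 0) : M)) ^ 2 = 1 := by
        rw [← ofAdd_nsmul]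
        have : (2 : ℕ) • ((p₁, p₂, 0) : M) = 0 := by
          ext
          · rw [Prod.smul_fst]; exact (two_smul ℕ p₁) ▸ hne2 p₁
          · rw [Prod.smul_snd, Prod.smul_fst]; exact (two_smul ℕ p₂) ▸ hne2 p₂
          · rw [Prod.smul_snd, Prod.smul_snd]; exact smul_zero 2
        rw [this]; rfl
      rw [this, map_one]
    have hthird : (Multiplicative.toAdd (w (Multiplicative.ofAdd ((p₁, p₂, 0) : M)))).2.2 = 0 := by
      have h0 : (2 : ℕ) • Multiplicative.toAdd (w (Multiplicative.ofAdd ((p₁, p₂, 0) : M))) = 0 := by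
        rw [← toAdd_pow, hsq]; rfl
      have h1 := congrArg (fun p : M => p.2.2) h0
      change (2 : ℕ) • (Multiplicative.toAdd (w (Multiplicative.ofAdd ((p₁, p₂, 0) : M)))).2.2 = 0 at h1
      rw [two_smul] at h1
      exact hQ2 _ h1
    have : Multiplicative.toAdd (w (Multiplicative.ofAdd ((p₁, p₂, 0) : M)))
        = (((σ (p₁, p₂)).1, (σ (p₁, p₂)).2, 0) : M) := by
      ext
      · rfl
      · rfl
      · exact hthird
    calc w (Multiplicative.ofAdd ((p₁, p₂, 0) : M))
        = Multiplicative.ofAdd (Multiplicative.toAdd (w (Multiplicative.ofAdd ((p₁, p₂, 0) : M)))) := rfl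
      _ = _ := by rw [this]
  have hσadd : ∀ p r : ZMod 2 × ZMod 2, σ (p + r) = σ p + σ r := by
    intro p r
    have e1 : w (Multiplicative.ofAdd ((p.1 + r.1, p.2 + r.2, 0) : M))
        = w (Multiplicative.ofAdd ((p.1, p.2, 0) : M)) * w (Multiplicative.ofAdd ((r.1, r.2, 0) : M)) := by
      rw [← map_mul]
      congr 1
      rw [← ofAdd_add]
      congr 1
      ext
      · rfl
      · rfl
      · exact (add_zero 0).symm
    rw [hwsplit p.1 p.2, hwsplit r.1 r.2, ← ofAdd_add] at e1
    have e2 : w (Multiplicative.ofAdd (((p + r).1, (p + r).2, 0) : M))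
        = w (Multiplicative.ofAdd ((p.1 + r.1, p.2 + r.2, 0) : M)) := rfl
    rw [hwsplit (p + r).1 (p + r).2] at e2
    rw [e1] at e2
    have e3 := Multiplicative.ofAdd.injective e2
    have c1 := congrArg Prod.fst e3
    have c2 := congrArg (fun m : M => m.2.1) e3
    simp only [Prod.fst_add, Prod.snd_add] at c1 c2
    ext
    · exact c1
    · exact c2
  have hσ4 : ∀ p : ZMod 2 × ZMod 2, σ (σ (σ (σ p))) = p := by
    intro p
    have hw4' : w * (w * (w * w)) = 1 := by
      rw [← hw4, pow_succ, pow_succ, pow_succ, pow_one]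
      simp only [mul_assoc]
    have e1 : w (w (w (w (Multiplicative.ofAdd ((p.1, p.2, 0) : M)))))
        = Multiplicative.ofAdd ((p.1, p.2, 0) : M) := by
      have := congrArg (fun u : MulAut A => u (Multiplicative.ofAdd ((p.1, p.2, 0) : M))) hw4'
      simpa [MulAut.mul_apply] using this
    rw [hwsplit p.1 p.2, hwsplit (σ (p.1, p.2)).1 (σ (p.1, p.2)).2,
      hwsplit (σ ((σ (p.1, p.2)).1, (σ (p.1, p.2)).2)).1 (σ ((σ (p.1, p.2)).1, (σ (p.1, p.2)).2)).2] at e1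
    rw [hwsplit _ _] at e1
    have e3 := Multiplicative.ofAdd.injective e1
    have c1 := congrArg Prod.fst e3
    have c2 := congrArg (fun m : M => m.2.1) e3
    ext
    · simpa using c1
    · simpa using c2
  have hσ2 : ∀ p, σ (σ p) = p := aux_invol σ hσadd hσ4
  -- w decomposes
  have hdecomp : ∀ m : M, w (Multiplicative.ofAdd m)
      = Multiplicative.ofAdd (((σ (m.1, m.2.1)).1, (σ (m.1, m.2.1)).2, m.2.2) : M) := by
    intro m
    have hm : (Multiplicative.ofAdd m : A)
        = Multiplicative.ofAdd ((m.1, m.2.1, 0) : M) * Multiplicative.ofAdd ((0, 0, m.2.2) : M) := by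
      rw [← ofAdd_add]
      congr 1
      ext
      · exact (add_zero m.1).symm
      · exact (add_zero m.2.1).symm
      · exact (zero_add m.2.2).symm
    rw [hm, map_mul, hwsplit m.1 m.2.1, hwq, ← ofAdd_add]
    congr 1
    ext
    · exact add_zero _
    · exact add_zero _
    · exact zero_add _
  -- σ is not the identity
  have hσne : ∃ p, σ p ≠ p := by
    by_contra hcon
    push_neg at hcon
    apply hw_ne
    apply MulEquiv.ext
    intro x
    rw [MulAut.one_apply]
    have : w (Multiplicative.ofAdd (Multiplicative.toAdd x))
        = Multiplicative.ofAdd (Multiplicative.toAdd x) := by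
      rw [hdecomp, hcon]
    exact this
  -- pick g ∈ G projecting to w
  obtain ⟨gg, hggG, hggr⟩ := Subgroup.mem_map.1 hw_mem
  have hgr : gg.right = w := hggr
  set a : M := Multiplicative.toAdd gg.left with ha
  have hg2r : (gg * gg).right = 1 := by
    rw [SemidirectProduct.mul_right, hgr]
    have : w * w = 1 := by
      apply MulEquiv.ext
      intro x
      rw [MulAut.mul_apply, MulAut.one_apply]
      have e1 : w (w (Multiplicative.ofAdd (Multiplicative.toAdd x)))
          = Multiplicative.ofAdd (Multiplicative.toAdd x) := by
        rw [hdecomp, hdecomp]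
        congr 1
        have : σ ((σ ((Multiplicative.toAdd x).1, (Multiplicative.toAdd x).2.1)).1,
            (σ ((Multiplicative.toAdd x).1, (Multiplicative.toAdd x).2.1)).2)
            = ((Multiplicative.toAdd x).1, (Multiplicative.toAdd x).2.1) := by
          rw [show ((σ ((Multiplicative.toAdd x).1, (Multiplicative.toAdd x).2.1)).1,
            (σ ((Multiplicative.toAdd x).1, (Multiplicative.toAdd x).2.1)).2)
            = σ ((Multiplicative.toAdd x).1, (Multiplicative.toAdd x).2.1) from rfl]
          exact hσ2 _
        ext
        · rw [this]
        · rw [this]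
        · rfl
      exact e1
    rw [this]
  have hg2mem : gg * gg ∈ G := mul_mem hggG hggG
  have h2comp := hker12 _ hg2mem hg2r
  have hleft2 : (gg * gg).left = gg.left * w gg.left := by
    rw [SemidirectProduct.mul_left]
    congr 1
    rw [show (MonoidHom.id (MulAut A)) gg.right = gg.right from rfl, hgr]
  have hwa : w gg.left = Multiplicative.ofAdd (((σ (a.1, a.2.1)).1, (σ (a.1, a.2.1)).2, a.2.2) : M) := by
    rw [show gg.left = Multiplicative.ofAdd a from rfl, hdecomp]
  have htoadd2 : Multiplicative.toAdd ((gg * gg).left)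
      = a + ((σ (a.1, a.2.1)).1, (σ (a.1, a.2.1)).2, a.2.2) := by
    rw [hleft2, toAdd_mul, hwa]
    rfl
  have hzmod2 : ∀ u v : ZMod 2, u + v = 0 → v = u := by decide
  have hfix : σ (a.1, a.2.1) = (a.1, a.2.1) := by
    have c1 : a.1 + (σ (a.1, a.2.1)).1 = 0 := by
      have := h2comp.1
      rw [htoadd2] at this
      exact this
    have c2 : a.2.1 + (σ (a.1, a.2.1)).2 = 0 := by
      have := h2comp.2
      rw [htoadd2] at this
      exact this
    ext
    · exact hzmod2 _ _ c1
    · exact hzmod2 _ _ c2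
  obtain ⟨x, hx⟩ := aux_fix σ hσadd hσ2 hσne (a.1, a.2.1) hfix
  obtain ⟨n, hnG, hnr, hnl⟩ := hker_surj (-(a.2.2))
  set g' : Hol A := n * gg with hg'
  have hg'mem : g' ∈ G := mul_mem hnG hggG
  have hg'r : g'.right = w := by
    rw [hg', SemidirectProduct.mul_right, hnr, one_mul, hgr]
  have hg'left : g'.left = n.left * gg.left := by
    rw [hg', SemidirectProduct.mul_left]
    congr 1
    rw [show (MonoidHom.id (MulAut A)) n.right = n.right from rfl, hnr]
    rfl
  set p : A := Multiplicative.ofAdd ((x.1, x.2, 0) : M) with hp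
  have hz2 : ∀ u s r : ZMod 2, u + s = r → r + s = u := by decide
  have hfixp : holSmul g' p = p := by
    rw [holSmul, hg'r, hp, hwsplit x.1 x.2, hg'left, hnl]
    rw [show gg.left = Multiplicative.ofAdd a from rfl]
    rw [← ofAdd_add, ← ofAdd_add]
    congr 1
    have hx1 : x.1 + (σ x).1 = a.1 := by
      have := congrArg Prod.fst hx
      simpa using this
    have hx2 : x.2 + (σ x).2 = a.2.1 := by
      have := congrArg (fun m : ZMod 2 × ZMod 2 => m.2) hx
      simpa using this
    ext
    · show (0 : ZMod 2) + a.1 + (σ (x.1, x.2)).1 = x.1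
      rw [zero_add]
      exact hz2 x.1 (σ x).1 a.1 hx1
    · show (0 : ZMod 2) + a.2.1 + (σ (x.1, x.2)).2 = x.2
      rw [zero_add]
      exact hz2 x.2 (σ x).2 a.2.1 hx2
    · show -(a.2.2) + a.2.2 + 0 = 0
      ring
  have h1p : holSmul (1 : Hol A) p = p := by
    rw [holSmul, SemidirectProduct.one_left, SemidirectProduct.one_right, one_mul]
    rfl
  obtain ⟨u, -, huniq⟩ := hreg p p
  have e1 : (⟨g', hg'mem⟩ : G) = u := huniq _ hfixp
  have e2 : (⟨1, one_mem G⟩ : G) = u := huniq _ h1p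
  have e3 : g' = (1 : Hol A) := by
    rw [← e2] at e1
    exact congrArg Subtype.val e1
  apply hw_ne
  rw [← hg'r, e3, SemidirectProduct.one_right]
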